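/- Let 𝒞 be an admissible contravariantly finite full additive subcategory of 𝒜, closed under direct summands, M an object of 𝒜 and n ≥ 0. The following are equivalent: (1) the 𝒞-proper 𝒞-dimension of M is at most n; (2) Ext^i_𝒞(M, N) = 0 for all N ∈ 𝒜 and all i ≥ n+1; (3) Ext^{n+1}_𝒞(M, N) = 0 for all N ∈ 𝒜; (4) for every left 𝒞-resolution C•_M → M, the kernel of the (−n+1)-st differential of C•_M lies in 𝒞. -/

import Mathlib

open CategoryTheory Limits

universe v u

variable {A : Type u} [Category.{v} A] [Abelian A]

/-- A complex `X` is `𝒞`-acyclic if `Hom_𝒜(C, X)` is an acyclic complex of abelian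
groups for every `C ∈ 𝒞`. -/
def CAcyclic (𝒞 : Set A) (X : CochainComplex A ℤ) : Prop :=
  ∀ C ∈ 𝒞, ∀ i : ℤ,
    (((preadditiveCoyoneda.obj (Opposite.op C)).mapHomologicalComplex
      (ComplexShape.up ℤ)).obj X).ExactAt i

/-- A chain map `f` is a `𝒞`-quasi-isomorphism if `Hom_𝒜(C, f)` is a quasi-isomorphism
for every `C ∈ 𝒞`. -/
def CQuasiIso (𝒞 : Set A) {X Y : CochainComplex A ℤ} (f : X ⟶ Y) : Prop :=
  ∀ C ∈ 𝒞, QuasiIso (((preadditiveCoyoneda.obj (Opposite.op C)).mapHomologicalComplex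
      (ComplexShape.up ℤ)).map f)

/-- A cochain complex is bounded above. -/
def BoundedAbove (X : CochainComplex A ℤ) : Prop :=
  ∃ n : ℤ, ∀ i : ℤ, n < i → IsZero (X.X i)

/-- `f : C ⟶ M` is a right `𝒞`-approximation of `M`. -/
def IsRightApprox (𝒞 : Set A) {C M : A} (f : C ⟶ M) : Prop :=
  C ∈ 𝒞 ∧ ∀ C' ∈ 𝒞, ∀ g : C' ⟶ M, ∃ h : C' ⟶ C, h ≫ f = g

/-- `𝒞` is contravariantly finite in `𝒜`: every object has a right `𝒞`-approximation. -/
def ContravariantlyFinite (𝒞 : Set A) : Prop :=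
  ∀ M : A, ∃ (C : A) (f : C ⟶ M), IsRightApprox 𝒞 f

/-- `𝒞` is admissible: every right `𝒞`-approximation is an epimorphism. -/
def Admissible (𝒞 : Set A) : Prop :=
  ∀ ⦃C M : A⦄ (f : C ⟶ M), IsRightApprox 𝒞 f → Epi f

/-- `(P, π)` is a left `𝒞`-resolution of `M`: a `Hom_𝒜(𝒞,-)`-exact augmented complex
`⋯ → P⁻¹ → P⁰ → M → 0` with all terms in `𝒞` (indexed cohomologically, concentrated
in degrees `≤ 0`). -/
def IsLeftRes (𝒞 : Set A) (M : A) (P : CochainComplex A ℤ) (π : P.X 0 ⟶ M) : Prop :=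
  (∀ i : ℤ, 0 < i → IsZero (P.X i)) ∧
  (∀ i : ℤ, i ≤ 0 → P.X i ∈ 𝒞) ∧
  P.d (-1) 0 ≫ π = 0 ∧
  ∀ C ∈ 𝒞,
    (∀ g : C ⟶ M, ∃ h : C ⟶ P.X 0, h ≫ π = g) ∧
    (∀ g : C ⟶ P.X 0, g ≫ π = 0 → ∃ h : C ⟶ P.X (-1), h ≫ P.d (-1) 0 = g) ∧
    (∀ i : ℤ, i < 0 → ∀ g : C ⟶ P.X i, g ≫ P.d i (i + 1) = 0 →
      ∃ h : C ⟶ P.X (i - 1), h ≫ P.d (i - 1) i = g)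

/-- Vanishing of `Ext^n_𝒞(M, N) = Hⁿ Hom_𝒜(P, N)` computed from a left `𝒞`-resolution
`P` of `M`: every `n`-cocycle of `Hom_𝒜(P, N)` is a coboundary. -/
def ExtVanish (P : CochainComplex A ℤ) (N : A) (n : ℤ) : Prop :=
  ∀ g : P.X (-n) ⟶ N, P.d (-n - 1) (-n) ≫ g = 0 →
    ∃ h : P.X (-n + 1) ⟶ N, P.d (-n) (-n + 1) ≫ h = g

/-- `𝒞` is closed under direct summands (hence under isomorphisms). -/
def SummandClosed (𝒞 : Set A) : Prop :=
  ∀ (X Y : A) (ι : Y ⟶ X) (r : X ⟶ Y), ι ≫ r = 𝟙 Y → X ∈ 𝒞 → Y ∈ 𝒞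

/-- The `n`-th syzygy of a left `𝒞`-resolution `(P, π)` of `M` (with the augmented
convention: the 0-th syzygy is `M` itself and the first is `Ker π`). -/
noncomputable def SyzObj {M : A} (P : CochainComplex A ℤ) (π : P.X 0 ⟶ M) : ℕ → A
  | 0 => M
  | 1 => kernel π
  | (n + 2) => kernel (P.d (-(n : ℤ) - 1) (-(n : ℤ)))

open ZeroObject

section Helpers
variable {𝒞 : Set A}

lemma zero_mem_of (hsum : SummandClosed 𝒞) {C₀ : A} (h : C₀ ∈ 𝒞) : (0 : A) ∈ 𝒞 :=
  hsum C₀ 0 0 0 ((isZero_zero A).eq_of_src _ _) h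

lemma extVanish_elim {P : CochainComplex A ℤ} {N : A} {i : ℤ} (hv : ExtVanish P N i)
    {a b c : ℤ} (ha : a = -i - 1) (hb : b = -i) (hc : c = -i + 1)
    (g : P.X b ⟶ N) (hg : P.d a b ≫ g = 0) :
    ∃ h : P.X c ⟶ N, P.d b c ≫ h = g := by
  subst ha hb hc; exact hv g hg

lemma res_liftc {M : A} {P : CochainComplex A ℤ} {π : P.X 0 ⟶ M}
    (hres : IsLeftRes 𝒞 M P π) {C : A} (hC : C ∈ 𝒞) {i j k : ℤ}
    (hi : i < 0) (hj : j = i + 1) (hk : k = i - 1) (g : C ⟶ P.X i)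
    (hg : g ≫ P.d i j = 0) : ∃ h : C ⟶ P.X k, h ≫ P.d k i = g := by
  subst hj hk; exact (hres.2.2.2 C hC).2.2 i hi g hg

lemma summand_split {X S T : A} (e : X ⟶ S) (he : Epi e) (ιT : T ⟶ X) (hTe : ιT ≫ e = 0)
    (q : kernel e ⟶ T) (hq : q ≫ ιT = kernel.ι e)
    (h : X ⟶ T) (hh : ιT ≫ h = 𝟙 T) : ∃ s : S ⟶ X, s ≫ e = 𝟙 S := by
  haveI := he
  have hz : kernel.ι e ≫ (𝟙 X - h ≫ ιT) = 0 := by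
    rw [← hq, Category.assoc, Preadditive.comp_sub, Preadditive.comp_sub, Category.comp_id]
    have : ιT ≫ h ≫ ιT = ιT := by rw [← Category.assoc, hh, Category.id_comp]
    rw [this, sub_self]
  refine ⟨Abelian.epiDesc e _ hz, ?_⟩
  rw [← cancel_epi e, ← Category.assoc, Abelian.comp_epiDesc, Preadditive.sub_comp, Category.id_comp,
    Category.assoc, hTe, comp_zero, sub_zero, Category.comp_id]

end Helpers

lemma syz_claim {𝒞 : Set A} (hadm : Admissible 𝒞) (hsum : SummandClosed 𝒞) {M : A}
    {P : CochainComplex A ℤ} {π : P.X 0 ⟶ M} (hres : IsLeftRes 𝒞 M P π) (m : ℕ)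
    (H : ∀ N : A, ExtVanish P N ((m : ℤ) + 2))
    {S : A} {b c : ℤ} (hb : b = -(m : ℤ) - 1) (hc : c = -(m : ℤ))
    (ιS : S ⟶ P.X c) (hmono : Mono ιS) (e : P.X b ⟶ S) (he : Epi e)
    (hei : e ≫ ιS = P.d b c) : S ∈ 𝒞 := by
  subst hb hc
  haveI := hmono
  set T := kernel (P.d (-(m:ℤ)-1) (-(m:ℤ))) with hT
  set ιT : T ⟶ P.X (-(m:ℤ)-1) := kernel.ι _ with hιT
  set e' : P.X (-(m:ℤ)-2) ⟶ T := kernel.lift _ _ (P.d_comp_d (-(m:ℤ)-2) (-(m:ℤ)-1) (-(m:ℤ))) with he'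
  have he'ι : e' ≫ ιT = P.d (-(m:ℤ)-2) (-(m:ℤ)-1) := kernel.lift_ι _ _ _
  have he'epi : Epi e' := by
    apply hadm e'
    refine ⟨hres.2.1 _ (by omega), fun C' hC' g => ?_⟩
    obtain ⟨h1, hh1⟩ := res_liftc hres hC' (i := -(m:ℤ)-1) (j := -(m:ℤ)) (k := -(m:ℤ)-2)
      (by omega) (by ring) (by ring) (g ≫ ιT) (by rw [Category.assoc, kernel.condition, comp_zero])
    exact ⟨h1, by rw [← cancel_mono ιT, Category.assoc, he'ι, hh1]⟩
  obtain ⟨h0, hh0⟩ := extVanish_elim (H T) (a := -(m:ℤ)-3) (b := -(m:ℤ)-2) (c := -(m:ℤ)-1)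
    (by ring) (by ring) (by ring) e'
    (by rw [← cancel_mono ιT, Category.assoc, he'ι, zero_comp, P.d_comp_d])
  haveI := he'epi
  have hιh0 : ιT ≫ h0 = 𝟙 T := by
    rw [← cancel_epi e', ← Category.assoc, he'ι, hh0, Category.comp_id]
  have hTe : ιT ≫ e = 0 := by
    rw [← cancel_mono ιS, Category.assoc, hei, zero_comp, kernel.condition]
  obtain ⟨s, hs⟩ := summand_split e he ιT hTe
    (kernel.lift _ (kernel.ι e) (by rw [← hei, ← Category.assoc, kernel.condition, zero_comp]))
    (kernel.lift_ι _ _ _) h0 hιh0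
  exact hsum _ _ s e hs (hres.2.1 _ (by omega))

lemma syz_mem_of_ext {𝒞 : Set A} (hadm : Admissible 𝒞) (hsum : SummandClosed 𝒞) {M : A}
    {P : CochainComplex A ℤ} {π : P.X 0 ⟶ M} (hres : IsLeftRes 𝒞 M P π) (n : ℕ)
    (H : ∀ N : A, ExtVanish P N ((n : ℤ) + 1)) : SyzObj P π n ∈ 𝒞 := by
  match n with
  | 0 =>
    show M ∈ 𝒞
    have hπepi : Epi π := hadm π ⟨hres.2.1 0 le_rfl, fun C' hC' g => (hres.2.2.2 C' hC').1 g⟩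
    set T := kernel π with hT
    set ιT : T ⟶ P.X 0 := kernel.ι π with hιT
    set e' : P.X (-1) ⟶ T := kernel.lift π (P.d (-1) 0) hres.2.2.1 with he'
    have he'ι : e' ≫ ιT = P.d (-1) 0 := kernel.lift_ι _ _ _
    have he'epi : Epi e' := by
      apply hadm e'
      refine ⟨hres.2.1 (-1) (by omega), fun C' hC' g => ?_⟩
      obtain ⟨h1, hh1⟩ := (hres.2.2.2 C' hC').2.1 (g ≫ ιT)
        (by rw [Category.assoc, kernel.condition, comp_zero])
      exact ⟨h1, by rw [← cancel_mono ιT, Category.assoc, he'ι, hh1]⟩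
    obtain ⟨h0, hh0⟩ := extVanish_elim (H T) (a := -2) (b := -1) (c := 0)
      (by norm_num) (by norm_num) (by norm_num) e'
      (by rw [← cancel_mono ιT, Category.assoc, he'ι, zero_comp, P.d_comp_d])
    haveI := he'epi
    have hιh0 : ιT ≫ h0 = 𝟙 T := by
      rw [← cancel_epi e', ← Category.assoc, he'ι, hh0, Category.comp_id]
    obtain ⟨s, hs⟩ := summand_split π hπepi ιT (kernel.condition π) (𝟙 _)
      (Category.id_comp _) h0 hιh0
    exact hsum _ _ s π hs (hres.2.1 0 le_rfl)
  | 1 =>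
    show kernel π ∈ 𝒞
    have H' : ∀ N : A, ExtVanish P N ((0 : ℤ) + 2) := fun N =>
      (by norm_num : (((1:ℕ) : ℤ) + 1) = (0 : ℤ) + 2) ▸ H N
    have heepi : Epi (kernel.lift π (P.d (-1) 0) hres.2.2.1) := by
      apply hadm
      refine ⟨hres.2.1 (-1) (by omega), fun C' hC' g => ?_⟩
      obtain ⟨h1, hh1⟩ := (hres.2.2.2 C' hC').2.1 (g ≫ kernel.ι π)
        (by rw [Category.assoc, kernel.condition, comp_zero])
      exact ⟨h1, by rw [← cancel_mono (kernel.ι π), Category.assoc, kernel.lift_ι, hh1]⟩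
    exact syz_claim hadm hsum hres 0 H' (b := -1) (c := 0) (by norm_num) (by norm_num)
      (kernel.ι π) inferInstance _ heepi (kernel.lift_ι _ _ _)
  | (m + 2) =>
    show kernel (P.d (-(m : ℤ) - 1) (-(m : ℤ))) ∈ 𝒞
    have H' : ∀ N : A, ExtVanish P N (((m+1 : ℕ) : ℤ) + 2) := fun N =>
      (by push_cast; ring : (((m+2:ℕ) : ℤ) + 1) = ((m+1 : ℕ) : ℤ) + 2) ▸ H N
    have heepi : Epi (kernel.lift (P.d (-(m:ℤ)-1) (-(m:ℤ))) (P.d (-(m:ℤ)-2) (-(m:ℤ)-1))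
        (P.d_comp_d _ _ _)) := by
      apply hadm
      refine ⟨hres.2.1 _ (by omega), fun C' hC' g => ?_⟩
      obtain ⟨h1, hh1⟩ := res_liftc hres hC' (i := -(m:ℤ)-1) (j := -(m:ℤ)) (k := -(m:ℤ)-2)
        (by omega) (by ring) (by ring) (g ≫ kernel.ι _) (by rw [Category.assoc, kernel.condition, comp_zero])
      exact ⟨h1, by rw [← cancel_mono (kernel.ι (P.d (-(m:ℤ)-1) (-(m:ℤ)))), Category.assoc,
        kernel.lift_ι, hh1]⟩
    exact syz_claim hadm hsum hres (m+1) H' (b := -(m:ℤ)-2) (c := -(m:ℤ)-1)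
      (by push_cast; ring) (by push_cast; ring)
      (kernel.ι _) inferInstance _ heepi (kernel.lift_ι _ _ _)
lemma res_compare {𝒞 : Set A} {M : A} {P Q : CochainComplex A ℤ} {π : P.X 0 ⟶ M}
    {ρ : Q.X 0 ⟶ M} (hP : IsLeftRes 𝒞 M P π) (hQ : IsLeftRes 𝒞 M Q ρ) (K : ℕ) :
    ∃ u : ∀ i : ℤ, P.X i ⟶ Q.X i,
      u 0 ≫ ρ = π ∧ ∀ j : ℤ, -(K : ℤ) < j → j ≤ 0 →
        P.d (j-1) j ≫ u j = u (j-1) ≫ Q.d (j-1) j := by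
  induction K with
  | zero =>
    obtain ⟨u0, hu0⟩ := (hQ.2.2.2 (P.X 0) (hP.2.1 0 le_rfl)).1 π
    refine ⟨Function.update (fun i => (0 : P.X i ⟶ Q.X i)) 0 u0, ?_, ?_⟩
    · rw [Function.update_self]; exact hu0
    · intro j hj hj'; omega
  | succ K ih =>
    obtain ⟨u, hu0, husq⟩ := ih
    -- build the next component at index -(K)-1
    have hCmem : P.X (-(K:ℤ)-1) ∈ 𝒞 := hP.2.1 _ (by omega)
    have : ∃ v : P.X (-(K:ℤ)-1) ⟶ Q.X (-(K:ℤ)-1),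
        v ≫ Q.d (-(K:ℤ)-1) (-(K:ℤ)) = P.d (-(K:ℤ)-1) (-(K:ℤ)) ≫ u (-(K:ℤ)) := by
      rcases K with _ | K'
      · show ∃ v : P.X (-1) ⟶ Q.X (-1), v ≫ Q.d (-1) 0 = P.d (-1) 0 ≫ u 0
        obtain ⟨v, hv⟩ := (hQ.2.2.2 _ (hP.2.1 (-1) (by omega))).2.1 (P.d (-1) 0 ≫ u 0)
          (by rw [Category.assoc, hu0, hP.2.2.1])
        exact ⟨v, hv⟩
      · have hsq := husq (-(K':ℤ)) (by push_cast; omega) (by omega)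
        rw [show -(K':ℤ) - 1 = -((K'+1:ℕ):ℤ) from by push_cast; ring] at hsq
        rw [show -(K':ℤ) = -((K'+1:ℕ):ℤ) + 1 from by push_cast; ring] at hsq
        obtain ⟨v, hv⟩ := (hQ.2.2.2 _ hCmem).2.2 (-((K'+1:ℕ):ℤ)) (by push_cast; omega)
          (P.d (-((K'+1:ℕ):ℤ)-1) (-((K'+1:ℕ):ℤ)) ≫ u (-((K'+1:ℕ):ℤ)))
          (by rw [Category.assoc, ← hsq, ← Category.assoc,
                HomologicalComplex.d_comp_d, zero_comp])
        exact ⟨v, hv⟩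
    obtain ⟨v, hv⟩ := this
    refine ⟨Function.update u (-(K:ℤ)-1) v, ?_, ?_⟩
    · rw [Function.update_of_ne (by omega : (0:ℤ) ≠ -(K:ℤ)-1)]; exact hu0
    · intro j hj hj'
      by_cases hjK : j = -(K:ℤ)
      · subst hjK
        rw [Function.update_of_ne (by omega : -(K:ℤ) ≠ -(K:ℤ)-1), Function.update_self]
        exact hv.symm
      · rw [Function.update_of_ne (by omega : j ≠ -(K:ℤ)-1),
          Function.update_of_ne (by omega : j - 1 ≠ -(K:ℤ)-1)]
        exact husq j (by omega) hj'

lemma res_homotopy {𝒞 : Set A} {M : A} {P : CochainComplex A ℤ} {π : P.X 0 ⟶ M}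
    (hP : IsLeftRes 𝒞 M P π) (w : ∀ i : ℤ, P.X i ⟶ P.X i) (hw0 : w 0 ≫ π = π) (K : ℕ) :
    (∀ j : ℤ, -(K : ℤ) ≤ j → j ≤ 0 → P.d (j-1) j ≫ w j = w (j-1) ≫ P.d (j-1) j) →
    ∃ s : ∀ a b : ℤ, P.X a ⟶ P.X b,
      (𝟙 (P.X 0) - w 0 = s 0 (-1) ≫ P.d (-1) 0) ∧
      ∀ j : ℤ, -(K : ℤ) - 1 < j → j < 0 →
        𝟙 (P.X j) - w j = s j (j-1) ≫ P.d (j-1) j + P.d j (j+1) ≫ s (j+1) j := by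
  induction K with
  | zero =>
    intro _
    obtain ⟨t0, ht0⟩ := (hP.2.2.2 (P.X 0) (hP.2.1 0 le_rfl)).2.1 (𝟙 (P.X 0) - w 0)
      (by rw [Preadditive.sub_comp, Category.id_comp, hw0, sub_self])
    refine ⟨Function.update (fun a => (fun b => (0 : P.X a ⟶ P.X b))) 0
      (Function.update (fun b => (0 : P.X 0 ⟶ P.X b)) (-1) t0), ?_, ?_⟩
    · rw [Function.update_self, Function.update_self]; exact ht0.symm
    · intro j hj hj'; omega
  | succ K ih =>
    intro hw
    obtain ⟨s, hs0, hrel⟩ := ih (fun j hj hj' => hw j (by push_cast at hj ⊢; omega) hj')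
    have key : P.d (-(K:ℤ)-1) (-(K:ℤ)) ≫
        (𝟙 (P.X (-(K:ℤ))) - w (-(K:ℤ)) - s (-(K:ℤ)) (-(K:ℤ)-1) ≫ P.d (-(K:ℤ)-1) (-(K:ℤ))) = 0 := by
      rcases K with _ | K'
      · show P.d (-1) 0 ≫ (𝟙 (P.X 0) - w 0 - s 0 (-1) ≫ P.d (-1) 0) = 0
        rw [hs0, sub_self, comp_zero]
      · have hr := hrel (-((K'+1:ℕ):ℤ)) (by push_cast; omega) (by push_cast; omega)
        have hr2 : 𝟙 (P.X (-((K'+1:ℕ):ℤ))) - w (-((K'+1:ℕ):ℤ)) -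
            s (-((K'+1:ℕ):ℤ)) (-((K'+1:ℕ):ℤ)-1) ≫ P.d (-((K'+1:ℕ):ℤ)-1) (-((K'+1:ℕ):ℤ)) =
            P.d (-((K'+1:ℕ):ℤ)) (-((K'+1:ℕ):ℤ)+1) ≫ s (-((K'+1:ℕ):ℤ)+1) (-((K'+1:ℕ):ℤ)) := by
          rw [hr]; abel
        rw [hr2, ← Category.assoc, HomologicalComplex.d_comp_d, zero_comp]
    set γ : P.X (-(K:ℤ)-1) ⟶ P.X (-(K:ℤ)-1) :=
      𝟙 (P.X (-(K:ℤ)-1)) - w (-(K:ℤ)-1) - P.d (-(K:ℤ)-1) (-(K:ℤ)) ≫ s (-(K:ℤ)) (-(K:ℤ)-1)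
      with hγdef
    have hγ : γ ≫ P.d (-(K:ℤ)-1) (-(K:ℤ)) = 0 := by
      have hwsq := hw (-(K:ℤ)) (by push_cast; omega) (by omega)
      rw [hγdef]
      simp only [Preadditive.sub_comp, Category.id_comp, Category.assoc]
      rw [← hwsq]
      calc P.d (-(K:ℤ)-1) (-(K:ℤ)) - P.d (-(K:ℤ)-1) (-(K:ℤ)) ≫ w (-(K:ℤ)) -
            P.d (-(K:ℤ)-1) (-(K:ℤ)) ≫ s (-(K:ℤ)) (-(K:ℤ)-1) ≫ P.d (-(K:ℤ)-1) (-(K:ℤ))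
          = P.d (-(K:ℤ)-1) (-(K:ℤ)) ≫ (𝟙 (P.X (-(K:ℤ))) - w (-(K:ℤ)) -
            s (-(K:ℤ)) (-(K:ℤ)-1) ≫ P.d (-(K:ℤ)-1) (-(K:ℤ))) := by
            simp [Preadditive.comp_sub]
        _ = 0 := key
    obtain ⟨t, ht⟩ := res_liftc hP (P := P) (π := π) (hP.2.1 (-(K:ℤ)-1) (by omega))
      (i := -(K:ℤ)-1) (j := -(K:ℤ)) (k := -(K:ℤ)-2) (by omega) (by ring) (by ring) γ hγ
    refine ⟨Function.update s (-(K:ℤ)-1)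
      (Function.update (s (-(K:ℤ)-1)) (-(K:ℤ)-2) t), ?_, ?_⟩
    · rw [Function.update_of_ne (by omega : (0:ℤ) ≠ -(K:ℤ)-1)]; exact hs0
    · intro j hj hj'
      by_cases hjK : j = -(K:ℤ)-1
      · subst hjK
        rw [Function.update_self]
        rw [show -(K:ℤ)-1-1 = -(K:ℤ)-2 from by ring,
          show -(K:ℤ)-1+1 = -(K:ℤ) from by ring]
        rw [Function.update_self,
          Function.update_of_ne (by omega : -(K:ℤ) ≠ -(K:ℤ)-1), ht, hγdef]
        abel
      · rw [Function.update_of_ne (by omega : j ≠ -(K:ℤ)-1),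
          Function.update_of_ne (by omega : j + 1 ≠ -(K:ℤ)-1)]
        exact hrel j (by push_cast at hj ⊢; omega) hj'
lemma one_to_two {𝒞 : Set A} {M : A} (n : ℕ)
    (h1 : ∃ (P₀ : CochainComplex A ℤ) (π₀ : P₀.X 0 ⟶ M), IsLeftRes 𝒞 M P₀ π₀ ∧
      ∀ i : ℤ, i < -(n : ℤ) → IsZero (P₀.X i))
    {P : CochainComplex A ℤ} {π : P.X 0 ⟶ M} (hres : IsLeftRes 𝒞 M P π)
    (N : A) (i : ℤ) (hi : (n : ℤ) + 1 ≤ i) : ExtVanish P N i := by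
  obtain ⟨P₀, π₀, hres₀, hb⟩ := h1
  obtain ⟨u, hu0, husq⟩ := res_compare hres hres₀ (i.toNat + 1)
  obtain ⟨v, hv0, hvsq⟩ := res_compare hres₀ hres (i.toNat + 1)
  set w : ∀ a : ℤ, P.X a ⟶ P.X a := fun a => u a ≫ v a with hwdef
  have hw0 : w 0 ≫ π = π := by rw [hwdef]; rw [Category.assoc, hv0, hu0]
  obtain ⟨s, hs0, hrel⟩ := res_homotopy hres w hw0 i.toNat (by
    intro j hj hj'
    show P.d (j-1) j ≫ u j ≫ v j = (u (j-1) ≫ v (j-1)) ≫ P.d (j-1) j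
    rw [← Category.assoc, husq j (by push_cast at hj ⊢; omega) hj', Category.assoc,
      hvsq j (by push_cast at hj ⊢; omega) hj', Category.assoc])
  have hwz : w (-i) = 0 := by
    show u (-i) ≫ v (-i) = 0
    rw [(hb (-i) (by omega)).eq_of_tgt (u (-i)) 0, zero_comp]
  have hrel' := hrel (-i) (by omega) (by omega)
  rw [hwz, sub_zero] at hrel'
  have hkey : P.d (-i) (-i+1) ≫ s (-i+1) (-i) =
      𝟙 (P.X (-i)) - s (-i) (-i-1) ≫ P.d (-i-1) (-i) := by
    rw [hrel']; abel
  intro g hg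
  refine ⟨s (-i+1) (-i) ≫ g, ?_⟩
  rw [← Category.assoc, hkey, Preadditive.sub_comp, Category.id_comp, Category.assoc,
    hg, comp_zero, sub_zero]
section Construction
variable (𝒞 : Set A) (hcf : ContravariantlyFinite 𝒞)

noncomputable def apxObj (K : A) : A := (hcf K).choose
noncomputable def apxHom (K : A) : apxObj 𝒞 hcf K ⟶ K := (hcf K).choose_spec.choose
omit [Abelian A] in
lemma apxHom_spec (K : A) : IsRightApprox 𝒞 (apxHom 𝒞 hcf K) :=
  (hcf K).choose_spec.choose_spec

@[reducible] noncomputable def SzK (M : A) : ℕ → A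
  | 0 => M
  | (k+1) => kernel (apxHom 𝒞 hcf (SzK M k))

@[reducible] noncomputable def RC (M : A) (k : ℕ) : A := apxObj 𝒞 hcf (SzK 𝒞 hcf M k)
@[reducible] noncomputable def Rf (M : A) (k : ℕ) : RC 𝒞 hcf M k ⟶ SzK 𝒞 hcf M k :=
  apxHom 𝒞 hcf _
noncomputable def Rg (M : A) (k : ℕ) : RC 𝒞 hcf M (k+1) ⟶ RC 𝒞 hcf M k :=
  (Rf 𝒞 hcf M (k+1) : RC 𝒞 hcf M (k+1) ⟶ kernel (apxHom 𝒞 hcf (SzK 𝒞 hcf M k))) ≫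
    kernel.ι (Rf 𝒞 hcf M k)

lemma Rg_comp (M : A) (k : ℕ) : Rg 𝒞 hcf M (k+1) ≫ Rg 𝒞 hcf M k = 0 := by
  show ((Rf 𝒞 hcf M (k+2) : _ ⟶ kernel (apxHom 𝒞 hcf (SzK 𝒞 hcf M (k+1)))) ≫
    kernel.ι (Rf 𝒞 hcf M (k+1))) ≫ ((Rf 𝒞 hcf M (k+1) :
      _ ⟶ kernel (apxHom 𝒞 hcf (SzK 𝒞 hcf M k))) ≫ kernel.ι (Rf 𝒞 hcf M k)) = 0
  rw [Category.assoc, ← Category.assoc (kernel.ι (Rf 𝒞 hcf M (k+1))), kernel.condition,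
    zero_comp, comp_zero]

noncomputable def RX (M : A) : ℤ → A :=
  fun i => if 0 < i then 0 else RC 𝒞 hcf M (-i).toNat

lemma RX_eq (M : A) {i : ℤ} {k : ℕ} (h : i ≤ 0) (hk : (-i).toNat = k) :
    RX 𝒞 hcf M i = RC 𝒞 hcf M k := by
  show (if 0 < i then 0 else RC 𝒞 hcf M (-i).toNat) = RC 𝒞 hcf M k
  rw [if_neg (by omega)]
  exact congrArg _ hk

noncomputable def Rd (M : A) : ∀ i : ℤ, RX 𝒞 hcf M i ⟶ RX 𝒞 hcf M (i+1) := fun i =>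
  if h : i + 1 ≤ 0 then
    eqToHom (RX_eq 𝒞 hcf M (by omega) (by omega : (-i).toNat = (-(i+1)).toNat + 1)) ≫
      Rg 𝒞 hcf M ((-(i+1)).toNat) ≫ eqToHom (RX_eq 𝒞 hcf M h rfl).symm
  else 0

lemma Rg_cast_comp (M : A) (k1 k2 : ℕ) (h : k1 = k2 + 1)
    (t : RC 𝒞 hcf M k1 = RC 𝒞 hcf M (k2+1)) :
    Rg 𝒞 hcf M k1 ≫ eqToHom t ≫ Rg 𝒞 hcf M k2 = 0 := by
  subst h
  rw [eqToHom_refl, Category.id_comp, Rg_comp]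

lemma Rd_sq (M : A) (i : ℤ) : Rd 𝒞 hcf M i ≫ Rd 𝒞 hcf M (i+1) = 0 := by
  by_cases h2 : i + 1 + 1 ≤ 0
  · have h1 : i + 1 ≤ 0 := by omega
    rw [Rd, Rd, dif_pos h1, dif_pos h2]
    simp only [Category.assoc, eqToHom_trans_assoc]
    calc eqToHom (RX_eq 𝒞 hcf M (by omega) (by omega)) ≫ Rg 𝒞 hcf M ((-(i+1)).toNat) ≫
          eqToHom ((RX_eq 𝒞 hcf M h1 rfl).symm.trans
            (RX_eq 𝒞 hcf M (by omega) (by omega : (-(i+1)).toNat = (-(i+1+1)).toNat + 1))) ≫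
          Rg 𝒞 hcf M ((-(i+1+1)).toNat) ≫ eqToHom (RX_eq 𝒞 hcf M h2 rfl).symm
        = eqToHom (RX_eq 𝒞 hcf M (by omega) (by omega)) ≫ (Rg 𝒞 hcf M ((-(i+1)).toNat) ≫
          eqToHom ((RX_eq 𝒞 hcf M h1 rfl).symm.trans
            (RX_eq 𝒞 hcf M (by omega) (by omega))) ≫
          Rg 𝒞 hcf M ((-(i+1+1)).toNat)) ≫ eqToHom (RX_eq 𝒞 hcf M h2 rfl).symm := by
          simp only [Category.assoc]
      _ = 0 := by
          rw [Rg_cast_comp 𝒞 hcf M _ _ (by omega) _, zero_comp, comp_zero]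
  · simp only [Rd, dif_neg h2, comp_zero]

noncomputable def Rcx (M : A) : CochainComplex A ℤ :=
  CochainComplex.of (RX 𝒞 hcf M) (Rd 𝒞 hcf M) (Rd_sq 𝒞 hcf M)

lemma Rcx_X (M : A) {i : ℤ} {k : ℕ} (h : i ≤ 0) (hk : (-i).toNat = k) :
    (Rcx 𝒞 hcf M).X i = RC 𝒞 hcf M k := RX_eq 𝒞 hcf M h hk

lemma Rcx_X_pos (M : A) {i : ℤ} (h : 0 < i) : IsZero ((Rcx 𝒞 hcf M).X i) := by
  show IsZero (if 0 < i then 0 else RC 𝒞 hcf M (-i).toNat)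
  rw [if_pos h]
  exact isZero_zero A

lemma Rcx_d (M : A) {i j : ℤ} {k : ℕ} (hij : i + 1 = j) (hj : j ≤ 0)
    (hk : (-j).toNat = k) :
    (Rcx 𝒞 hcf M).d i j = eqToHom (Rcx_X 𝒞 hcf M (by omega) (by omega : (-i).toNat = k+1)) ≫
      Rg 𝒞 hcf M k ≫ eqToHom (Rcx_X 𝒞 hcf M hj hk).symm := by
  subst hij; subst hk
  refine (CochainComplex.of_d _ _ i).trans ?_
  simp only [Rd]
  rw [dif_pos hj]
  rfl

end Construction
section Construction2
variable (𝒞 : Set A) (hcf : ContravariantlyFinite 𝒞)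

lemma Rg_Rf (M : A) : Rg 𝒞 hcf M 0 ≫ (Rf 𝒞 hcf M 0 : RC 𝒞 hcf M 0 ⟶ M) = 0 := by
  show ((Rf 𝒞 hcf M 1 : _ ⟶ kernel (apxHom 𝒞 hcf (SzK 𝒞 hcf M 0))) ≫
    kernel.ι (Rf 𝒞 hcf M 0)) ≫ _ = 0
  rw [Category.assoc, kernel.condition, comp_zero]

noncomputable def Rρ (M : A) : (Rcx 𝒞 hcf M).X 0 ⟶ M :=
  eqToHom (Rcx_X 𝒞 hcf M le_rfl (by norm_num)) ≫
    (Rf 𝒞 hcf M 0 : RC 𝒞 hcf M 0 ⟶ M)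

lemma Rcx_res (M : A) : IsLeftRes 𝒞 M (Rcx 𝒞 hcf M) (Rρ 𝒞 hcf M) := by
  refine ⟨fun i hi => Rcx_X_pos 𝒞 hcf M hi, fun i hi => ?_, ?_, fun C' hC' => ⟨?_, ?_, ?_⟩⟩
  · rw [Rcx_X 𝒞 hcf M hi rfl]
    exact (apxHom_spec 𝒞 hcf (SzK 𝒞 hcf M ((-i).toNat))).1
  · -- d(-1,0) ≫ Rρ = 0
    rw [Rcx_d 𝒞 hcf M (show (-1:ℤ) + 1 = 0 by norm_num) le_rfl (by norm_num : ((-(0:ℤ)).toNat) = 0)]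
    simp only [Rρ, Category.assoc, eqToHom_trans_assoc, eqToHom_refl, Category.id_comp]
    rw [Rg_Rf, comp_zero]
  · -- lifting through Rρ
    intro g
    obtain ⟨h, hh⟩ := (apxHom_spec 𝒞 hcf (SzK 𝒞 hcf M 0)).2 C' hC' g
    refine ⟨h ≫ eqToHom (Rcx_X 𝒞 hcf M le_rfl (by norm_num : ((-(0:ℤ)).toNat) = 0)).symm, ?_⟩
    simp only [Rρ, Category.assoc, eqToHom_trans_assoc, eqToHom_refl, Category.id_comp]
    exact hh
  · -- lifting kernels at degree 0
    intro g hg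
    have hg' : (g ≫ eqToHom (Rcx_X 𝒞 hcf M le_rfl (by norm_num : ((-(0:ℤ)).toNat) = 0))) ≫
        Rf 𝒞 hcf M 0 = 0 := by
      simp only [Rρ, Category.assoc] at hg
      simpa only [Category.assoc] using hg
    obtain ⟨t, ht⟩ := (apxHom_spec 𝒞 hcf (SzK 𝒞 hcf M 1)).2 C' hC'
      (kernel.lift (Rf 𝒞 hcf M 0) _ hg')
    refine ⟨t ≫ eqToHom (Rcx_X 𝒞 hcf M (by norm_num) (by norm_num : ((-(-1:ℤ)).toNat) = 1)).symm, ?_⟩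
    have ht' : t ≫ Rf 𝒞 hcf M 1 = kernel.lift (Rf 𝒞 hcf M 0) _ hg' := ht
    rw [Rcx_d 𝒞 hcf M (show (-1:ℤ) + 1 = 0 by norm_num) le_rfl (by norm_num : ((-(0:ℤ)).toNat) = 0)]
    simp only [Category.assoc, eqToHom_trans_assoc, eqToHom_refl, Category.id_comp]
    show t ≫ ((Rf 𝒞 hcf M 1 : _ ⟶ kernel (apxHom 𝒞 hcf (SzK 𝒞 hcf M 0))) ≫
      kernel.ι (Rf 𝒞 hcf M 0)) ≫ eqToHom (Rcx_X 𝒞 hcf M le_rfl (by norm_num)).symm = g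
    simp only [← Category.assoc]
    rw [ht', kernel.lift_ι]
    simp only [Category.assoc, eqToHom_trans, eqToHom_refl, Category.comp_id]
  · -- lifting kernels at negative degrees
    intro i hi g hg
    obtain ⟨k', hk'⟩ : ∃ k', (-i).toNat = k' + 1 := ⟨(-i).toNat - 1, by omega⟩
    have hk2 : (-(i+1)).toNat = k' := by omega
    rw [Rcx_d 𝒞 hcf M rfl (by omega) hk2] at hg
    simp only [← Category.assoc] at hg
    have hg2 : (g ≫ eqToHom (Rcx_X 𝒞 hcf M (by omega) hk')) ≫ Rg 𝒞 hcf M k' = 0 := by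
      rw [← cancel_mono (eqToHom (Rcx_X 𝒞 hcf M (by omega : i + 1 ≤ 0) hk2).symm), zero_comp]
      exact hg
    have hg3 : (g ≫ eqToHom (Rcx_X 𝒞 hcf M (by omega) hk')) ≫ Rf 𝒞 hcf M (k'+1) = 0 := by
      rw [← cancel_mono (kernel.ι (Rf 𝒞 hcf M k')), zero_comp, Category.assoc]
      exact hg2
    obtain ⟨t, ht⟩ := (apxHom_spec 𝒞 hcf (SzK 𝒞 hcf M (k'+2))).2 C' hC'
      (kernel.lift (Rf 𝒞 hcf M (k'+1)) _ hg3)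
    have ht' : t ≫ Rf 𝒞 hcf M (k'+2) = kernel.lift (Rf 𝒞 hcf M (k'+1)) _ hg3 := ht
    refine ⟨t ≫ eqToHom (Rcx_X 𝒞 hcf M (by omega) (by omega : (-(i-1)).toNat = k'+2)).symm, ?_⟩
    rw [Rcx_d 𝒞 hcf M (show (i-1) + 1 = i by ring) (by omega) hk']
    simp only [Category.assoc, eqToHom_trans_assoc, eqToHom_refl, Category.id_comp]
    show t ≫ ((Rf 𝒞 hcf M (k'+2) : _ ⟶ kernel (apxHom 𝒞 hcf (SzK 𝒞 hcf M (k'+1)))) ≫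
      kernel.ι (Rf 𝒞 hcf M (k'+1))) ≫ eqToHom (Rcx_X 𝒞 hcf M (by omega : i ≤ 0) hk').symm = g
    simp only [← Category.assoc]
    rw [ht', kernel.lift_ι]
    simp only [Category.assoc, eqToHom_trans, eqToHom_refl, Category.comp_id]

end Construction2
section Trunc

lemma trunc_zero {𝒞 : Set A} (hz : (0:A) ∈ 𝒞) {M : A} (hM : M ∈ 𝒞) :
    ∃ (P' : CochainComplex A ℤ) (π' : P'.X 0 ⟶ M), IsLeftRes 𝒞 M P' π' ∧
      ∀ i : ℤ, i < 0 → IsZero (P'.X i) := by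
  set X : ℤ → A := fun i => if i = 0 then M else 0 with hX
  set P' : CochainComplex A ℤ := CochainComplex.of X (fun _ => 0) (fun _ => by simp) with hP'
  have hX0 : P'.X 0 = M := by
    show (if (0:ℤ) = 0 then M else 0) = M
    rw [if_pos rfl]
  have hXne : ∀ i : ℤ, i ≠ 0 → IsZero (P'.X i) := by
    intro i hi
    show IsZero (if i = 0 then M else 0)
    rw [if_neg hi]
    exact isZero_zero A
  have hd : ∀ i j : ℤ, P'.d i j = 0 := by
    intro i j
    by_cases hij : i + 1 = j
    · subst hij; exact CochainComplex.of_d X (fun i => (0 : X i ⟶ X (i+1))) i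
    · exact P'.shape i j hij
  refine ⟨P', eqToHom hX0, ⟨fun i hi => hXne i (by omega), fun i _ => ?_, ?_, fun C' hC' => ⟨?_, ?_, ?_⟩⟩,
    fun i hi => hXne i (by omega)⟩
  · by_cases hi0 : i = 0
    · subst hi0; rw [show P'.X 0 = M from hX0]; exact hM
    · have : P'.X i = (0:A) := by
        show (if i = 0 then M else 0) = 0
        rw [if_neg hi0]
      rw [this]; exact hz
  · rw [hd, zero_comp]
  · exact fun g => ⟨g ≫ eqToHom hX0.symm, by simp⟩
  · intro g hg
    have hg0 : g = 0 := by
      rw [← cancel_mono (eqToHom hX0), zero_comp]; exact hg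
    exact ⟨0, by rw [hg0, zero_comp]⟩
  · intro i hi g _
    have hg0 : g = 0 := (hXne i (by omega)).eq_of_tgt g 0
    exact ⟨0, by rw [hg0, zero_comp]⟩

lemma d_cast (P : CochainComplex A ℤ) {a b : ℤ} (hab : a = b) {W Z : A} (f : W ⟶ P.X a)
    (e : P.X a = P.X b) (c : ℤ) (t : P.X c ⟶ Z) :
    f ≫ eqToHom e ≫ P.d b c ≫ t = f ≫ P.d a c ≫ t := by
  subst hab; simp

variable {𝒞 : Set A} {M : A}

lemma trunc_pos {P : CochainComplex A ℤ} {π : P.X 0 ⟶ M}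
    (hres : IsLeftRes 𝒞 M P π) (hz : (0 : A) ∈ 𝒞) (m : ℕ)
    (S : A) (ιS : S ⟶ P.X (-(m:ℤ))) (hmono : Mono ιS) (hS : S ∈ 𝒞)
    (hout : ∀ c : ℤ, ιS ≫ P.d (-(m:ℤ)) c = 0)
    (houtπ : ∀ (_ : m = 0), ιS ≫ eqToHom (congrArg P.X (show -(m:ℤ) = 0 by omega)) ≫ π = 0)
    (hfacπ : ∀ (_ : m = 0) (C : A), C ∈ 𝒞 → ∀ g : C ⟶ P.X (-(m:ℤ)),
      g ≫ eqToHom (congrArg P.X (show -(m:ℤ) = 0 by omega)) ≫ π = 0 →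
        ∃ q : C ⟶ S, q ≫ ιS = g)
    (hfacd : ∀ (_ : 1 ≤ m) (C : A), C ∈ 𝒞 → ∀ g : C ⟶ P.X (-(m:ℤ)),
      g ≫ P.d (-(m:ℤ)) (-(m:ℤ)+1) = 0 → ∃ q : C ⟶ S, q ≫ ιS = g) :
    ∃ (P' : CochainComplex A ℤ) (π' : P'.X 0 ⟶ M), IsLeftRes 𝒞 M P' π' ∧
      ∀ i : ℤ, i < -(m:ℤ) - 1 → IsZero (P'.X i) := by
  classical
  haveI := hmono
  set X : ℤ → A := fun i =>
    if i < -(m:ℤ)-1 then 0 else if i = -(m:ℤ)-1 then S else P.X i with hXdef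
  have hXzero : ∀ i : ℤ, i < -(m:ℤ)-1 → X i = 0 := fun i hi => if_pos hi
  have hXS : ∀ i : ℤ, i = -(m:ℤ)-1 → X i = S := by
    intro i hi
    show (if i < -(m:ℤ)-1 then 0 else if i = -(m:ℤ)-1 then S else P.X i) = S
    rw [if_neg (by omega), if_pos hi]
  have hXP : ∀ i : ℤ, -(m:ℤ)-1 < i → X i = P.X i := by
    intro i hi
    show (if i < -(m:ℤ)-1 then 0 else if i = -(m:ℤ)-1 then S else P.X i) = P.X i
    rw [if_neg (by omega), if_neg (by omega)]
  set d : ∀ i : ℤ, X i ⟶ X (i+1) := fun i =>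
    if h1 : i < -(m:ℤ)-1 then 0
    else if h2 : i = -(m:ℤ)-1 then
      eqToHom (hXS i h2) ≫ ιS ≫
        eqToHom ((congrArg P.X (show -(m:ℤ) = i+1 by omega)).trans (hXP (i+1) (by omega)).symm)
    else
      eqToHom (hXP i (by omega)) ≫ P.d i (i+1) ≫ eqToHom (hXP (i+1) (by omega)).symm
    with hddef
  have hsq : ∀ i : ℤ, d i ≫ d (i+1) = 0 := by
    intro i
    by_cases h1 : i < -(m:ℤ)-1
    · simp only [hddef]
      rw [dif_pos h1, zero_comp]
    by_cases h2 : i = -(m:ℤ)-1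
    · simp only [hddef]
      rw [dif_neg h1, dif_pos h2, dif_neg (by omega), dif_neg (by omega)]
      simp only [Category.assoc, eqToHom_trans_assoc]
      rw [d_cast P (show -(m:ℤ) = i+1 by omega)]
      have hkill : ∀ (c : ℤ) {Z : A} (t : P.X c ⟶ Z), ιS ≫ P.d (-(m:ℤ)) c ≫ t = 0 := by
        intro c Z t; rw [← Category.assoc, hout, zero_comp]
      rw [hkill, comp_zero]
    · simp only [hddef]
      rw [dif_neg h1, dif_neg h2, dif_neg (by omega), dif_neg (by omega)]
      simp only [Category.assoc, eqToHom_trans_assoc, eqToHom_refl, Category.id_comp]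
      rw [← Category.assoc (P.d i (i+1)), HomologicalComplex.d_comp_d]
      simp
  set P' : CochainComplex A ℤ := CochainComplex.of X d hsq with hP'def
  have hZ : ∀ i : ℤ, i < -(m:ℤ)-1 → P'.X i = (0:A) := hXzero
  have hZS : ∀ i : ℤ, i = -(m:ℤ)-1 → P'.X i = S := hXS
  have hZP : ∀ i : ℤ, -(m:ℤ)-1 < i → P'.X i = P.X i := hXP
  have hIsZ : ∀ i : ℤ, i < -(m:ℤ)-1 → IsZero (P'.X i) := by
    intro i hi
    rw [hZ i hi]
    exact isZero_zero A
  have hPd : ∀ i : ℤ, P'.d i (i+1) = d i := fun i => CochainComplex.of_d _ _ i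
  have hdS : ∀ (i j : ℤ) (_ : i + 1 = j) (_ : i = -(m:ℤ)-1)
      (e1 : P'.X i = S) (e2 : P.X (-(m:ℤ)) = P'.X j),
      P'.d i j = eqToHom e1 ≫ ιS ≫ eqToHom e2 := by
    intro i j hij hi e1 e2
    subst hij
    rw [hPd i]
    simp only [hddef]
    rw [dif_neg (by omega), dif_pos hi]
  have hdP : ∀ (i j : ℤ) (_ : i + 1 = j) (_ : -(m:ℤ)-1 < i)
      (e1 : P'.X i = P.X i) (e2 : P.X j = P'.X j),
      P'.d i j = eqToHom e1 ≫ P.d i j ≫ eqToHom e2 := by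
    intro i j hij hi e1 e2
    subst hij
    rw [hPd i]
    simp only [hddef]
    rw [dif_neg (by omega), dif_neg (by omega)]
  refine ⟨P', eqToHom (hZP 0 (by omega)) ≫ π, ⟨?_, ?_, ?_, fun C' hC' => ⟨?_, ?_, ?_⟩⟩,
    fun i hi => hIsZ i hi⟩
  · -- zero above 0
    intro i hi
    have : P'.X i = P.X i := hZP i (by omega)
    rw [this]
    exact hres.1 i hi
  · -- membership
    intro i hi
    by_cases h1 : i < -(m:ℤ)-1
    · rw [hZ i h1]; exact hz
    by_cases h2 : i = -(m:ℤ)-1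
    · rw [hZS i h2]; exact hS
    · rw [hZP i (by omega)]; exact hres.2.1 i hi
  · -- augmentation
    by_cases hm : m = 0
    · subst hm
      rw [hdS (-1) 0 (by ring) (by omega) (hZS (-1) (by omega))
        ((congrArg P.X (show -((0:ℕ):ℤ) = (0:ℤ) by omega)).trans (hZP 0 (by omega)).symm)]
      simp only [Category.assoc, eqToHom_trans_assoc, eqToHom_refl, Category.id_comp]
      simpa using houtπ rfl
    · rw [hdP (-1) 0 (by ring) (by omega) (hZP (-1) (by omega)) ((hZP 0 (by omega)).symm)]
      simp only [Category.assoc, eqToHom_trans_assoc, eqToHom_refl, Category.id_comp]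
      rw [hres.2.2.1, comp_zero]
  · -- lift through the augmentation
    intro g
    obtain ⟨h, hh⟩ := (hres.2.2.2 C' hC').1 g
    refine ⟨h ≫ eqToHom (hZP 0 (by omega)).symm, ?_⟩
    simp only [Category.assoc, eqToHom_trans_assoc, eqToHom_refl, Category.id_comp]
    exact hh
  · -- lifting at degree 0
    intro g hg
    by_cases hm : m = 0
    · subst hm
      have hcond : (g ≫ eqToHom ((hZP 0 (by omega)).trans
          (congrArg P.X (show (0:ℤ) = -((0:ℕ):ℤ) by omega)))) ≫
          eqToHom (congrArg P.X (show -((0:ℕ):ℤ) = (0:ℤ) by omega)) ≫ π = 0 := by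
        simpa only [Category.assoc, eqToHom_trans_assoc, eqToHom_refl, Category.id_comp]
          using hg
      obtain ⟨q, hq⟩ := hfacπ rfl C' hC' _ hcond
      refine ⟨q ≫ eqToHom (hZS (-1) (by omega)).symm, ?_⟩
      rw [hdS (-1) 0 (by ring) (by omega) (hZS (-1) (by omega))
        ((congrArg P.X (show -((0:ℕ):ℤ) = (0:ℤ) by omega)).trans (hZP 0 (by omega)).symm)]
      simp only [Category.assoc, eqToHom_trans_assoc, eqToHom_refl, Category.id_comp]
      rw [← Category.assoc, hq]
      simp only [Category.assoc, eqToHom_trans, eqToHom_refl, Category.comp_id]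
    · obtain ⟨h, hh⟩ := (hres.2.2.2 C' hC').2.1 (g ≫ eqToHom (hZP 0 (by omega)))
        (by simpa only [Category.assoc] using hg)
      refine ⟨h ≫ eqToHom (hZP (-1) (by omega)).symm, ?_⟩
      rw [hdP (-1) 0 (by ring) (by omega) (hZP (-1) (by omega)) ((hZP 0 (by omega)).symm)]
      simp only [Category.assoc, eqToHom_trans_assoc, eqToHom_refl, Category.id_comp]
      rw [← Category.assoc, hh]
      simp only [Category.assoc, eqToHom_trans, eqToHom_refl, Category.comp_id]
  · -- lifting at negative degrees
    intro i hi g hg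
    by_cases h1 : i ≤ -(m:ℤ)-1
    · -- g lands in S or 0, and must be zero
      have hg0 : g = 0 := by
        rcases lt_or_eq_of_le h1 with h1' | h1'
        · exact (hIsZ i h1').eq_of_tgt g 0
        · rw [hdS i (i+1) rfl h1' (hZS i h1') ((congrArg P.X (show -(m:ℤ) = i+1 by omega)).trans
            (hZP (i+1) (by omega)).symm)] at hg
          have hg1 : (g ≫ eqToHom (hZS i h1')) ≫ ιS = 0 := by
            rw [← cancel_mono (eqToHom ((congrArg P.X (show -(m:ℤ) = i+1 by omega)).trans
              (hZP (i+1) (by omega)).symm)), zero_comp]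
            simpa only [Category.assoc] using hg
          have hg2 : g ≫ eqToHom (hZS i h1') = 0 := by
            rw [← cancel_mono ιS, zero_comp]; exact hg1
          rw [← cancel_mono (eqToHom (hZS i h1')), zero_comp]; exact hg2
      exact ⟨0, by rw [zero_comp, hg0]⟩
    by_cases h2 : i = -(m:ℤ)
    · -- lift into S
      subst h2
      have hm1 : 1 ≤ m := by omega
      rw [hdP (-(m:ℤ)) (-(m:ℤ)+1) rfl (by omega) (hZP _ (by omega))
        ((hZP _ (by omega)).symm)] at hg
      have hcond : (g ≫ eqToHom (hZP (-(m:ℤ)) (by omega))) ≫ P.d (-(m:ℤ)) (-(m:ℤ)+1) = 0 := by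
        rw [← cancel_mono (eqToHom ((hZP (-(m:ℤ)+1) (by omega)).symm)), zero_comp]
        simpa only [Category.assoc] using hg
      obtain ⟨q, hq⟩ := hfacd hm1 C' hC' _ hcond
      refine ⟨q ≫ eqToHom (hZS (-(m:ℤ)-1) rfl).symm, ?_⟩
      rw [hdS (-(m:ℤ)-1) (-(m:ℤ)) (by ring) rfl (hZS _ rfl) ((hZP _ (by omega)).symm)]
      simp only [Category.assoc, eqToHom_trans_assoc, eqToHom_refl, Category.id_comp]
      rw [← Category.assoc, hq]
      simp only [Category.assoc, eqToHom_trans, eqToHom_refl, Category.comp_id]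
    · -- pure P region
      rw [hdP i (i+1) rfl (by omega) (hZP i (by omega)) ((hZP (i+1) (by omega)).symm)] at hg
      have hcond : (g ≫ eqToHom (hZP i (by omega))) ≫ P.d i (i+1) = 0 := by
        rw [← cancel_mono (eqToHom ((hZP (i+1) (by omega)).symm)), zero_comp]
        simpa only [Category.assoc] using hg
      obtain ⟨h, hh⟩ := res_liftc hres hC' (i := i) (j := i+1) (k := i-1) hi rfl rfl _ hcond
      refine ⟨h ≫ eqToHom (hZP (i-1) (by omega)).symm, ?_⟩
      rw [hdP (i-1) i (by ring) (by omega) (hZP (i-1) (by omega)) ((hZP i (by omega)).symm)]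
      simp only [Category.assoc, eqToHom_trans_assoc, eqToHom_refl, Category.id_comp]
      rw [← Category.assoc, hh]
      simp only [Category.assoc, eqToHom_trans, eqToHom_refl, Category.comp_id]

end Trunc
lemma d_cast2 (P : CochainComplex A ℤ) {a b : ℤ} (hab : a = b) {W : A} (f : W ⟶ P.X a)
    (e : P.X a = P.X b) (c : ℤ) : f ≫ eqToHom e ≫ P.d b c = f ≫ P.d a c := by
  subst hab; simp

lemma d_congr (P : CochainComplex A ℤ) {a b c : ℤ} (hbc : b = c) (e : P.X b = P.X c) :
    P.d a c = P.d a b ≫ eqToHom e := by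
  subst hbc; simp

lemma four_to_one {𝒞 : Set A} (hcf : ContravariantlyFinite 𝒞) (hsum : SummandClosed 𝒞)
    (M : A) (n : ℕ)
    (h4 : ∀ (P : CochainComplex A ℤ) (π : P.X 0 ⟶ M), IsLeftRes 𝒞 M P π → SyzObj P π n ∈ 𝒞) :
    ∃ (P : CochainComplex A ℤ) (π : P.X 0 ⟶ M), IsLeftRes 𝒞 M P π ∧
      ∀ i : ℤ, i < -(n : ℤ) → IsZero (P.X i) := by
  have hres := Rcx_res 𝒞 hcf M
  have hz : (0:A) ∈ 𝒞 := zero_mem_of hsum (hres.2.1 0 le_rfl)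
  have hS := h4 _ _ hres
  rcases n with _ | n'
  · obtain ⟨P', π', h1, h2⟩ := trunc_zero hz (hS : M ∈ 𝒞)
    exact ⟨P', π', h1, fun i hi => h2 i (by push_cast at hi; omega)⟩
  rcases n' with _ | m'
  · -- n = 1
    have hout : ∀ c : ℤ, kernel.ι (Rρ 𝒞 hcf M) ≫ (Rcx 𝒞 hcf M).d (-((0:ℕ):ℤ)) c = 0 := by
      intro c
      by_cases hc : (-((0:ℕ):ℤ)) + 1 = c
      · subst hc
        exact (Rcx_X_pos 𝒞 hcf M (show (0:ℤ) < -((0:ℕ):ℤ) + 1 by omega)).eq_of_tgt _ 0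
      · rw [(Rcx 𝒞 hcf M).shape _ c hc, comp_zero]
    have houtpi : kernel.ι (Rρ 𝒞 hcf M) ≫ eqToHom (congrArg (Rcx 𝒞 hcf M).X
        (show -((0:ℕ):ℤ) = (0:ℤ) by omega)) ≫ Rρ 𝒞 hcf M = 0 := by
      simpa using kernel.condition (Rρ 𝒞 hcf M)
    have hfacpi : ∀ (C : A), C ∈ 𝒞 → ∀ g : C ⟶ (Rcx 𝒞 hcf M).X (-((0:ℕ):ℤ)),
        g ≫ eqToHom (congrArg (Rcx 𝒞 hcf M).X (show -((0:ℕ):ℤ) = (0:ℤ) by omega)) ≫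
          Rρ 𝒞 hcf M = 0 → ∃ q : C ⟶ kernel (Rρ 𝒞 hcf M), q ≫ kernel.ι (Rρ 𝒞 hcf M) = g := by
      intro C hC g hg
      have hg' : (g ≫ eqToHom (congrArg (Rcx 𝒞 hcf M).X
          (show -((0:ℕ):ℤ) = (0:ℤ) by omega))) ≫ Rρ 𝒞 hcf M = 0 := by
        simpa only [Category.assoc] using hg
      refine ⟨kernel.lift (Rρ 𝒞 hcf M) _ hg', ?_⟩
      rw [kernel.lift_ι]
      simp
    obtain ⟨P', π', h1, h2⟩ := trunc_pos hres hz 0 (kernel (Rρ 𝒞 hcf M))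
      (kernel.ι (Rρ 𝒞 hcf M)) inferInstance hS hout (fun _ => houtpi)
      (fun _ => hfacpi) (fun hm => absurd hm (by omega))
    exact ⟨P', π', h1, fun i hi => h2 i (by push_cast at hi ⊢; omega)⟩
  · -- n = m' + 2
    have hab : -(m':ℤ) - 1 = -((m'+1:ℕ):ℤ) := by push_cast; ring
    have hout : ∀ c : ℤ, (kernel.ι ((Rcx 𝒞 hcf M).d (-(m':ℤ)-1) (-(m':ℤ))) ≫
        eqToHom (congrArg (Rcx 𝒞 hcf M).X hab)) ≫ (Rcx 𝒞 hcf M).d (-((m'+1:ℕ):ℤ)) c = 0 := by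
      intro c
      by_cases hc : c = -(m':ℤ)
      · subst hc
        rw [Category.assoc, d_cast2 (Rcx 𝒞 hcf M) hab, kernel.condition]
      · rw [(Rcx 𝒞 hcf M).shape _ c (show ¬(-((m'+1:ℕ):ℤ) + 1 = c) by push_cast at hc ⊢; omega),
          comp_zero]
    have hfacd : ∀ (C : A), C ∈ 𝒞 → ∀ g : C ⟶ (Rcx 𝒞 hcf M).X (-((m'+1:ℕ):ℤ)),
        g ≫ (Rcx 𝒞 hcf M).d (-((m'+1:ℕ):ℤ)) (-((m'+1:ℕ):ℤ)+1) = 0 →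
        ∃ q : C ⟶ kernel ((Rcx 𝒞 hcf M).d (-(m':ℤ)-1) (-(m':ℤ))),
          q ≫ (kernel.ι ((Rcx 𝒞 hcf M).d (-(m':ℤ)-1) (-(m':ℤ))) ≫
            eqToHom (congrArg (Rcx 𝒞 hcf M).X hab)) = g := by
      intro C hC g hg
      have hg' : (g ≫ eqToHom (congrArg (Rcx 𝒞 hcf M).X hab.symm)) ≫
          (Rcx 𝒞 hcf M).d (-(m':ℤ)-1) (-(m':ℤ)) = 0 := by
        rw [Category.assoc, d_cast2 (Rcx 𝒞 hcf M) hab.symm,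
          d_congr (Rcx 𝒞 hcf M) (show -((m'+1:ℕ):ℤ) + 1 = -(m':ℤ) by push_cast; ring)
            (congrArg _ (by push_cast; ring)), ← Category.assoc, hg, zero_comp]
      refine ⟨kernel.lift _ _ hg', ?_⟩
      rw [← Category.assoc, kernel.lift_ι]
      simp
    obtain ⟨P', π', h1, h2⟩ := trunc_pos hres hz (m'+1)
      (kernel ((Rcx 𝒞 hcf M).d (-(m':ℤ)-1) (-(m':ℤ))))
      (kernel.ι _ ≫ eqToHom (congrArg (Rcx 𝒞 hcf M).X hab)) inferInstance hS
      hout (fun hm => absurd hm (by omega)) (fun hm C hC g hg => absurd hm (by omega))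
      (fun _ => hfacd)
    exact ⟨P', π', h1, fun i hi => h2 i (by push_cast at hi ⊢; omega)⟩

/-- characterizations of `𝒞𝒞-dim M ≤ n`. -/
theorem stmt11 (𝒞 : Set A) (hcf : ContravariantlyFinite 𝒞) (hadm : Admissible 𝒞)
    (hsum : SummandClosed 𝒞) (M : A) (n : ℕ) :
    [ -- (1) the 𝒞-proper 𝒞-dimension of M is at most n
      ∃ (P : CochainComplex A ℤ) (π : P.X 0 ⟶ M), IsLeftRes 𝒞 M P π ∧
        ∀ i : ℤ, i < -(n : ℤ) → IsZero (P.X i),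
      -- (2) Ext^i_𝒞(M, N) = 0 for all N and i ≥ n + 1
      ∀ (P : CochainComplex A ℤ) (π : P.X 0 ⟶ M), IsLeftRes 𝒞 M P π →
        ∀ N : A, ∀ i : ℤ, (n : ℤ) + 1 ≤ i → ExtVanish P N i,
      -- (3) Ext^{n+1}_𝒞(M, N) = 0 for all N
      ∀ (P : CochainComplex A ℤ) (π : P.X 0 ⟶ M), IsLeftRes 𝒞 M P π →
        ∀ N : A, ExtVanish P N ((n : ℤ) + 1),
      -- (4) for every left 𝒞-resolution, the n-th syzygy (the kernel of the
      -- (-n+1)-st differential of the augmented resolution) lies in 𝒞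
      ∀ (P : CochainComplex A ℤ) (π : P.X 0 ⟶ M), IsLeftRes 𝒞 M P π →
        SyzObj P π n ∈ 𝒞 ].TFAE := by
  tfae_have 1 → 2 := fun h1 P π hres N i hi => one_to_two n h1 hres N i hi
  tfae_have 2 → 3 := fun h2 P π hres N => h2 P π hres N ((n : ℤ) + 1) le_rfl
  tfae_have 3 → 4 := fun h3 P π hres =>
    syz_mem_of_ext hadm hsum hres n (fun N => h3 P π hres N)
  tfae_have 4 → 1 := fun h4 => four_to_one hcf hsum M n h4
  tfae_finish
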